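/- Let n ≥ 1 and let c be a real number with c ≠ 1. If C is an n×n random real matrix whose diagonal entries are all fixed equal to 1 and whose off-diagonal entries are independent, each distributed according to a Borel probability measure on ℝ that is atomless off 0, then P(det C = c) = 0. -/

import Mathlib

open MeasureTheory
open scoped ENNReal

section Aux

variable {n : ℕ}

/-- Update a single entry of a doubly-indexed function. -/
def updE (x : Fin n → Fin n → ℝ) (i j : Fin n) (t : ℝ) : Fin n → Fin n → ℝ :=
  Function.update x i (Function.update (x i) j t)

lemma updE_apply (x : Fin n → Fin n → ℝ) (i j : Fin n) (t : ℝ) (i' j' : Fin n) :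
    updE x i j t i' j' = if i' = i then (if j' = j then t else x i j') else x i' j' := by
  simp [updE, Function.update_apply, apply_ite (fun f : Fin n → ℝ => f j')]

lemma updE_updE (x : Fin n → Fin n → ℝ) (i j : Fin n) (t v : ℝ) :
    updE (updE x i j t) i j v = updE x i j v := by
  funext i' j'
  simp only [updE_apply]
  by_cases h : i' = i <;> by_cases h' : j' = j <;> simp [h, h']

lemma measurable_updE (i j : Fin n) (t : ℝ) :
    Measurable fun x : Fin n → Fin n → ℝ => updE x i j t := by
  apply measurable_pi_lambda
  intro i'
  apply measurable_pi_lambda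
  intro j'
  simp only [updE_apply]
  by_cases h : i' = i <;> by_cases h' : j' = j <;>
    simp [h, h'] <;>
    first
      | exact measurable_const
      | exact (measurable_pi_apply _).comp (measurable_pi_apply _)

lemma measurable_updE_t (x : Fin n → Fin n → ℝ) (i j : Fin n) :
    Measurable fun t : ℝ => updE x i j t :=
  (measurable_update x).comp (measurable_update (x i))

/-- One-variable step: substituting the entry `(i,j)` by the only possible atom `v`
of its law can only increase the probability of the zero set of a function affine in
that entry. -/
lemma step (ν : Fin n → Fin n → Measure ℝ) [∀ i j, IsProbabilityMeasure (ν i j)]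
    (g : (Fin n → Fin n → ℝ) → ℝ) (hg : Measurable g) (i j : Fin n) (v : ℝ)
    (hv : ∀ t : ℝ, t ≠ v → ν i j {t} = 0)
    (haff : ∀ x t, g (updE x i j t) =
      g (updE x i j 0) + t * (g (updE x i j 1) - g (updE x i j 0))) :
    Measure.pi (fun i => Measure.pi (ν i)) {x | g x = 0} ≤
      Measure.pi (fun i => Measure.pi (ν i)) {x | g (updE x i j v) = 0} := by
  classical
  set π := Measure.pi (fun i => Measure.pi (ν i)) with hπ
  set M : Fin n → Measure (Fin n → ℝ) := fun i => Measure.pi (ν i) with hM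
  have hA : MeasurableSet {x : Fin n → Fin n → ℝ | g x = 0} :=
    hg (measurableSet_singleton 0)
  have hB : MeasurableSet {x : Fin n → Fin n → ℝ | g (updE x i j v) = 0} :=
    (hg.comp (measurable_updE i j v)) (measurableSet_singleton 0)
  set F : (Fin n → Fin n → ℝ) → ℝ≥0∞ := Set.indicator {x | g x = 0} 1 with hF
  set G : (Fin n → Fin n → ℝ) → ℝ≥0∞ :=
    Set.indicator {x | g (updE x i j v) = 0} 1 with hG
  have hFm : Measurable F := measurable_one.indicator hA
  have hGm : Measurable G := measurable_one.indicator hB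
  -- the pointwise one-dimensional estimate
  have hpt : ∀ x : Fin n → Fin n → ℝ,
      ∫⁻ t, F (updE x i j t) ∂ν i j ≤ ∫⁻ t, G (updE x i j t) ∂ν i j := by
    intro x
    have hGconst : ∀ t : ℝ, G (updE x i j t) = G x := by
      intro t
      simp only [hG, Set.indicator_apply, Set.mem_setOf_eq, updE_updE, Pi.one_apply]
    have hRHS : ∫⁻ t, G (updE x i j t) ∂ν i j = G x := by
      simp only [hGconst]
      simp [lintegral_const]
    rw [hRHS]
    set a := g (updE x i j 0) with ha
    set b := g (updE x i j 1) - g (updE x i j 0) with hb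
    have hFt : ∀ t : ℝ, F (updE x i j t) =
        Set.indicator {t : ℝ | a + t * b = 0} 1 t := by
      intro t
      simp only [hF, Set.indicator_apply, Set.mem_setOf_eq, haff x t, ← ha, ← hb,
        Pi.one_apply]
      rfl
    have hSm : MeasurableSet {t : ℝ | a + t * b = 0} := by
      have : Measurable fun t : ℝ => a + t * b := by fun_prop
      exact this (measurableSet_singleton 0)
    have hLHS : ∫⁻ t, F (updE x i j t) ∂ν i j = ν i j {t : ℝ | a + t * b = 0} := by
      simp only [hFt]
      exact lintegral_indicator_one hSm
    rw [hLHS]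
    have hGx : G x = Set.indicator {x | g (updE x i j v) = 0} 1 x := rfl
    by_cases hav : a + v * b = 0
    · have : G x = 1 := by
        simp only [hG, Set.indicator_apply, Set.mem_setOf_eq, haff x v, ← ha, ← hb]
        simp [hav]
        exact hav
      rw [this]
      exact prob_le_one
    · have : G x = 0 := by
        simp only [hG, Set.indicator_apply, Set.mem_setOf_eq, haff x v, ← ha, ← hb]
        simp [hav]
        exact hav
      rw [this]
      by_cases hbz : b = 0
      · have haz : a ≠ 0 := by simpa [hbz] using hav
        have : {t : ℝ | a + t * b = 0} = ∅ := by
          ext t; simp [hbz, haz]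
        simp [this]
      · have hset : {t : ℝ | a + t * b = 0} = {-a / b} := by
          ext t
          simp only [Set.mem_setOf_eq, Set.mem_singleton_iff]
          constructor
          · intro h
            field_simp
            linarith
          · rintro rfl
            field_simp
            ring
        have hne : (-a / b : ℝ) ≠ v := by
          intro h
          apply hav
          rw [← h]
          field_simp
          ring
        rw [hset, hv _ hne]
  -- Fubini: compare the two integrals over the product measure
  have key : ∀ F' G' : (Fin n → Fin n → ℝ) → ℝ≥0∞, Measurable F' → Measurable G' →
      (∀ x, ∫⁻ t, F' (updE x i j t) ∂ν i j ≤ ∫⁻ t, G' (updE x i j t) ∂ν i j) →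
      ∫⁻ x, F' x ∂π ≤ ∫⁻ x, G' x ∂π := by
    intro F' G' hF' hG' hle
    set y₀ : Fin n → Fin n → ℝ := fun _ _ => 0 with hy₀
    have expand : ∀ H : (Fin n → Fin n → ℝ) → ℝ≥0∞, Measurable H →
        ∫⁻ x, H x ∂π =
          (∫⋯∫⁻_(Finset.univ.erase i),
            (fun x => (∫⋯∫⁻_(Finset.univ.erase j),
              (fun r => ∫⁻ t, H (Function.update x i (Function.update r j t)) ∂ν i j)
              ∂(ν i)) (x i)) ∂(fun i => Measure.pi (ν i))) y₀ := by
      intro H hH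
      rw [hπ]
      rw [show Measure.pi M = Measure.pi (fun i => Measure.pi (ν i)) from rfl]
      rw [lintegral_eq_lmarginal_univ y₀,
        lmarginal_erase' (μ := fun i => Measure.pi (ν i)) H hH (Finset.mem_univ i)]
      congr 1
      funext x
      have hin : Measurable fun r : Fin n → ℝ => H (Function.update x i r) :=
        hH.comp (measurable_update x)
      rw [show (∫⁻ xᵢ, H (Function.update x i xᵢ) ∂Measure.pi (ν i))
            = (∫⋯∫⁻_(Finset.univ : Finset (Fin n)),
                (fun r => H (Function.update x i r)) ∂(ν i)) (x i) from
          lintegral_eq_lmarginal_univ (x i),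
        lmarginal_erase' (μ := ν i) _ hin (Finset.mem_univ j)]
    rw [expand F' hF', expand G' hG']
    apply lmarginal_mono
    intro x
    apply lmarginal_mono
    intro r
    have hrew : ∀ (H : (Fin n → Fin n → ℝ) → ℝ≥0∞) (t : ℝ),
        H (Function.update x i (Function.update r j t))
          = H (updE (Function.update x i r) i j t) := by
      intro H t
      congr 1
      simp [updE]
    simp only [hrew F', hrew G']
    exact hle _
  have h1 : π {x | g x = 0} = ∫⁻ x, F x ∂π := (lintegral_indicator_one hA).symm
  have h2 : π {x | g (updE x i j v) = 0} = ∫⁻ x, G x ∂π :=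
    (lintegral_indicator_one hB).symm
  rw [h1, h2]
  exact key F G hFm hGm hpt

/-- Determinant is an affine function of each single entry. -/
lemma det_affine (x : Fin n → Fin n → ℝ) (i j : Fin n) (t : ℝ) :
    (Matrix.of (updE x i j t)).det =
      (Matrix.of (updE x i j 0)).det +
        t * ((Matrix.of (updE x i j 1)).det - (Matrix.of (updE x i j 0)).det) := by
  classical
  have hm : ∀ s : ℝ, Matrix.of (updE x i j s)
      = (Matrix.of x).updateRow i (Function.update (x i) j s) := by
    intro s
    ext i' j'
    simp [Matrix.updateRow_apply, updE_apply, Function.update_apply]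
  have hrow : Function.update (x i) j t =
      Function.update (x i) j 0 +
        t • (Function.update (x i) j 1 - Function.update (x i) j 0) := by
    funext k
    by_cases hk : k = j <;> simp [Function.update_apply, hk] <;> ring
  rw [hm t, hm 0, hm 1, hrow]
  set M := Matrix.of x
  set u0 := Function.update (x i) j (0 : ℝ)
  set u1 := Function.update (x i) j (1 : ℝ)
  have hsub : (M.updateRow i (u1 - u0)).det
      = (M.updateRow i u1).det - (M.updateRow i u0).det := by
    have := Matrix.det_updateRow_add M i u0 (u1 - u0)
    simp only [add_sub_cancel] at this
    linarith
  rw [Matrix.det_updateRow_add, Matrix.det_updateRow_smul, hsub]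
  try ring

lemma measurable_det :
    Measurable fun x : Fin n → Fin n → ℝ => (Matrix.of x).det := by
  classical
  simp only [Matrix.det_apply']
  refine Finset.measurable_sum _ fun σ _ => Measurable.const_mul ?_ _
  exact Finset.measurable_prod _ fun k _ =>
    (measurable_pi_apply _).comp (measurable_pi_apply (σ k))

end Aux

/-- For a random `n × n` real matrix of type `C_n` — all diagonal entries
are (almost surely) fixed equal to `1`, and the off-diagonal entries are independent with
laws that are atomless off `0` — the probability that `det C = c` is `0` for every real
`c ≠ 1`. -/
theorem typeC_det_eq_const_ne_one_prob_zero
    (n : ℕ) (hn : 1 ≤ n) (c : ℝ) (hc : c ≠ 1)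
    (μ : Fin n → Fin n → Measure ℝ)
    [∀ i j, IsProbabilityMeasure (μ i j)]
    (hfixed : ∀ i : Fin n, μ i i = Measure.dirac 1)
    (hatomless : ∀ i j : Fin n, i ≠ j → ∀ x : ℝ, x ≠ 0 → μ i j {x} = 0) :
    Measure.pi (fun i => Measure.pi (fun j => μ i j))
      {C : Fin n → Fin n → ℝ | (Matrix.of C).det = c} = 0 := by
  classical
  set π := Measure.pi (fun i => Measure.pi (fun j => μ i j)) with hπ
  set x₀ : Fin n → Fin n → ℝ := fun i j => if i = j then 1 else 0 with hx₀
  -- the unified atom hypothesis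
  have hv : ∀ i j : Fin n, ∀ t : ℝ, t ≠ x₀ i j → μ i j {t} = 0 := by
    intro i j t ht
    by_cases hij : i = j
    · subst hij
      have ht1 : t ≠ 1 := by simpa [hx₀] using ht
      rw [hfixed i, Measure.dirac_apply' 1 (measurableSet_singleton t)]
      simp [Set.indicator_apply, Ne.symm ht1]
    · exact hatomless i j hij t (by simpa [hx₀, hij] using ht)
  set g : (Fin n → Fin n → ℝ) → ℝ := fun x => (Matrix.of x).det - c with hgdef
  have hg : Measurable g := measurable_det.sub measurable_const
  have haff : ∀ (i j : Fin n) (x) (t : ℝ), g (updE x i j t) =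
      g (updE x i j 0) + t * (g (updE x i j 1) - g (updE x i j 0)) := by
    intro i j x t
    simp only [hgdef]
    rw [det_affine]
    ring
  -- substitution of a finite set of entries by the base point
  set subst : Finset (Fin n × Fin n) → (Fin n → Fin n → ℝ) → (Fin n → Fin n → ℝ) :=
    fun s x i j => if (i, j) ∈ s then x₀ i j else x i j with hsubst
  have hsubst_meas : ∀ s, Measurable (subst s) := by
    intro s
    apply measurable_pi_lambda
    intro i
    apply measurable_pi_lambda
    intro j
    simp only [hsubst]
    by_cases h : (i, j) ∈ s
    · simp only [if_pos h]; exact measurable_const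
    · simp only [if_neg h]
      exact (measurable_pi_apply _).comp (measurable_pi_apply _)
  have hsubst_comm : ∀ (s : Finset (Fin n × Fin n)) (p : Fin n × Fin n), p ∉ s →
      ∀ (x) (t : ℝ), subst s (updE x p.1 p.2 t) = updE (subst s x) p.1 p.2 t := by
    intro s p hp x t
    obtain ⟨pi, pj⟩ := p
    funext i j
    simp only [hsubst, updE_apply]
    by_cases h1 : i = pi
    · subst h1
      by_cases h2 : j = pj
      · subst h2
        simp [hp]
      · simp [h2]
    · simp [h1]
  have hsubst_insert : ∀ (s : Finset (Fin n × Fin n)) (p : Fin n × Fin n), p ∉ s →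
      ∀ x, subst s (updE x p.1 p.2 (x₀ p.1 p.2)) = subst (insert p s) x := by
    intro s p hp x
    obtain ⟨pi, pj⟩ := p
    funext i j
    simp only [hsubst, updE_apply, Finset.mem_insert]
    by_cases h1 : i = pi
    · subst h1
      by_cases h2 : j = pj
      · subst h2
        simp
      · simp [h2, Prod.ext_iff]
    · simp [h1, Prod.ext_iff]
  -- the main induction
  have main : ∀ s : Finset (Fin n × Fin n),
      π {x | g x = 0} ≤ π {x | g (subst s x) = 0} := by
    intro s
    induction s using Finset.induction with
    | empty =>
        have : subst ∅ = id := by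
          funext x i j; simp [hsubst]
        rw [this]
        simp
    | @insert p s hp ih =>
        refine le_trans ih ?_
        have hstep := step μ (fun x => g (subst s x)) (hg.comp (hsubst_meas s))
          p.1 p.2 (x₀ p.1 p.2) (hv p.1 p.2)
          (by
            intro x t
            simp only [hsubst_comm s p hp]
            exact haff p.1 p.2 (subst s x) t)
        refine le_trans hstep (le_of_eq ?_)
        congr 1
        ext x
        simp only [Set.mem_setOf_eq, hsubst_insert s p hp x]
  have hfin := main Finset.univ
  have hsu : subst Finset.univ = fun _ => x₀ := by
    funext x i j; simp [hsubst]
  rw [hsu] at hfin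
  have hgx₀ : g x₀ ≠ 0 := by
    have h1 : Matrix.of x₀ = (1 : Matrix (Fin n) (Fin n) ℝ) := by
      ext i j
      simp [hx₀, Matrix.one_apply]
    simp only [hgdef, h1, Matrix.det_one]
    exact sub_ne_zero_of_ne (Ne.symm hc)
  have : {x : Fin n → Fin n → ℝ | g x₀ = 0} = ∅ := by
    ext x; simp [hgx₀]
  rw [this] at hfin
  simp only [measure_empty, le_zero_iff] at hfin
  have hset : {C : Fin n → Fin n → ℝ | (Matrix.of C).det = c}
      = {x | g x = 0} := by
    ext x
    simp [hgdef, sub_eq_zero]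
  rw [hset]
  exact hfin
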